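/- Let X₁ and X₂ be geodesic metric spaces and let f : X₁ → X₂ be a quasi-isometry, i.e. there are constants λ ≥ 1, α ≥ 0, C ≥ 0 such that (1/λ)·d(x,y) − α ≤ d(f(x), f(y)) ≤ λ·d(x,y) + α for all x,y ∈ X₁ and every point of X₂ lies within distance C of the image f(X₁). Then X₁ is δ₁-hyperbolic for some δ₁ ≥ 0 if and only if X₂ is δ₂-hyperbolic for some δ₂ ≥ 0. -/

import Mathlib

/-- A geodesic segment: an isometric map `c : [0,T] → X`. -/
def IsGeodesicSegment {X : Type*} [MetricSpace X] (c : ℝ → X) (T : ℝ) : Prop :=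
  ∀ s ∈ Set.Icc (0:ℝ) T, ∀ t ∈ Set.Icc (0:ℝ) T, dist (c s) (c t) = |s - t|

/-- A geodesic ray: an isometric map `c : [0,∞) → X`. -/
def IsGeodesicRay {X : Type*} [MetricSpace X] (c : ℝ → X) : Prop :=
  ∀ s t : ℝ, 0 ≤ s → 0 ≤ t → dist (c s) (c t) = |s - t|

/-- Two geodesic rays are asymptotic if they stay at bounded distance. -/
def AsymptoticRays {X : Type*} [MetricSpace X] (c₁ c₂ : ℝ → X) : Prop :=
  ∃ B : ℝ, ∀ t : ℝ, 0 ≤ t → dist (c₁ t) (c₂ t) ≤ B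

/-- A geodesic metric space: every pair of points is joined by a geodesic segment. -/
def IsGeodesicSpace (X : Type*) [MetricSpace X] : Prop :=
  ∀ x y : X, ∃ c : ℝ → X, IsGeodesicSegment c (dist x y) ∧ c 0 = x ∧ c (dist x y) = y

/-- `δ`-hyperbolicity: every geodesic triangle is `δ`-thin. -/
def DeltaHyperbolic (X : Type*) [MetricSpace X] (δ : ℝ) : Prop :=
  ∀ (c₀ c₁ c₂ : ℝ → X) (T₀ T₁ T₂ : ℝ),
    0 ≤ T₀ → 0 ≤ T₁ → 0 ≤ T₂ →
    IsGeodesicSegment c₀ T₀ → IsGeodesicSegment c₁ T₁ → IsGeodesicSegment c₂ T₂ →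
    c₀ T₀ = c₁ 0 → c₁ T₁ = c₂ 0 → c₂ T₂ = c₀ 0 →
    ∀ t ∈ Set.Icc (0:ℝ) T₀,
      ∃ p ∈ (c₁ '' Set.Icc (0:ℝ) T₁) ∪ (c₂ '' Set.Icc (0:ℝ) T₂), dist (c₀ t) p ≤ δ

lemma geodesic_reverse {X : Type*} [MetricSpace X] {c : ℝ → X} {T : ℝ}
    (h : IsGeodesicSegment c T) : IsGeodesicSegment (fun s => c (T - s)) T := by
  intro s hs t ht
  simp only
  rw [h (T - s) ⟨by linarith [hs.2], by linarith [hs.1]⟩ (T - t)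
      ⟨by linarith [ht.2], by linarith [ht.1]⟩]
  rw [show T - s - (T - t) = t - s by ring, abs_sub_comm]

lemma sqrt_half_step (N : ℕ) (hN : 2 ≤ N) :
    6 * Real.sqrt (((N : ℝ) + 1) / 2) + 1 ≤ 6 * Real.sqrt N := by
  set s := Real.sqrt (N : ℝ) with hs
  set u := Real.sqrt (((N : ℝ) + 1) / 2) with hu
  have hNR : (2 : ℝ) ≤ (N : ℝ) := by exact_mod_cast hN
  have hs0 : 0 ≤ s := Real.sqrt_nonneg _
  have hu0 : 0 ≤ u := Real.sqrt_nonneg _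
  have hs2 : s * s = (N : ℝ) := Real.mul_self_sqrt (by linarith)
  have hu2 : u * u = ((N : ℝ) + 1) / 2 := Real.mul_self_sqrt (by linarith)
  nlinarith [sq_nonneg (s - u), sq_nonneg (s - 1.4), sq_nonneg (s + 1.4), sq_nonneg (6*s - 6*u - 1)]

lemma chain_thin {X : Type*} [MetricSpace X] (hgeo : IsGeodesicSpace X)
    {δ : ℝ} (hδ : 0 ≤ δ) (hX : DeltaHyperbolic X δ) (K : ℝ) (hK : 1 ≤ K) :
    ∀ N : ℕ, ∀ x : ℕ → X, (∀ i, i < N → dist (x i) (x (i+1)) ≤ K) →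
    ∀ (c : ℝ → X) (T : ℝ), 0 ≤ T → IsGeodesicSegment c T → c 0 = x 0 → c T = x N →
    ∀ t ∈ Set.Icc (0:ℝ) T, ∃ i, i ≤ N ∧ dist (c t) (x i) ≤ 6 * δ * Real.sqrt N + K := by
  intro N
  induction N using Nat.strong_induction_on with
  | _ N IH =>
  intro x hx c T hT hc hc0 hcT t ht
  rcases Nat.lt_or_ge N 2 with hN2 | hN2
  · -- base cases N = 0, 1
    refine ⟨0, Nat.zero_le _, ?_⟩
    have h1 : dist (c t) (x 0) = t := by
      rw [← hc0, hc t ht 0 ⟨le_refl _, hT⟩, sub_zero, abs_of_nonneg ht.1]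
    have hTd : T = dist (x 0) (x N) := by
      rw [← hc0, ← hcT, hc 0 ⟨le_refl _, hT⟩ T ⟨hT, le_refl _⟩, zero_sub, abs_neg,
        abs_of_nonneg hT]
    have hTK : T ≤ K := by
      interval_cases N
      · rw [hTd, dist_self]; linarith
      · rw [hTd]; exact hx 0 (by norm_num)
    have h2 : 0 ≤ 6 * δ * Real.sqrt N := by positivity
    rw [h1]; linarith [ht.2]
  · -- inductive step
    set m := (N + 1) / 2 with hm
    have hmN : m < N := by omega
    have hNm : N - m < N := by omega
    have key : ∀ M : ℕ, ((M : ℝ) ≤ ((N : ℝ) + 1) / 2) →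
        6 * δ * Real.sqrt M + K + δ ≤ 6 * δ * Real.sqrt N + K := by
      intro M hM
      have h1 : Real.sqrt M ≤ Real.sqrt (((N : ℝ) + 1) / 2) := Real.sqrt_le_sqrt hM
      have h2 := sqrt_half_step N hN2
      nlinarith [Real.sqrt_nonneg (M : ℝ)]
    have hmle : (m : ℝ) ≤ ((N : ℝ) + 1) / 2 := by
      have h : 2 * m ≤ N + 1 := by omega
      have h' : (2 : ℝ) * (m : ℝ) ≤ (N : ℝ) + 1 := by exact_mod_cast h
      linarith
    have hNmle : ((N - m : ℕ) : ℝ) ≤ ((N : ℝ) + 1) / 2 := by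
      have h : 2 * (N - m) ≤ N + 1 := by omega
      have h' : (2 : ℝ) * ((N - m : ℕ) : ℝ) ≤ (N : ℝ) + 1 := by exact_mod_cast h
      linarith
    obtain ⟨c₁, hc₁, hc₁0, hc₁e⟩ := hgeo (x 0) (x m)
    obtain ⟨c₂, hc₂, hc₂0, hc₂e⟩ := hgeo (x m) (x N)
    set d₁ := dist (x 0) (x m) with hd₁
    set d₂ := dist (x m) (x N) with hd₂
    obtain ⟨p, hp, hdp⟩ := hX c (fun s => c₂ (d₂ - s)) (fun s => c₁ (d₁ - s)) T d₂ d₁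
      hT dist_nonneg dist_nonneg hc (geodesic_reverse hc₂) (geodesic_reverse hc₁)
      (by simp only [sub_zero]; rw [hcT, ← hc₂e])
      (by simp only [sub_self, sub_zero]; rw [hc₂0, ← hc₁e])
      (by simp only [sub_self]; rw [hc₁0, ← hc0]) t ht
    rcases hp with hp | hp
    · -- p on reversed c₂ : second half chain
      obtain ⟨v, hv, hpv⟩ := hp
      have hv' : d₂ - v ∈ Set.Icc (0:ℝ) d₂ := ⟨by linarith [hv.2], by linarith [hv.1]⟩
      obtain ⟨i, hiN, hdi⟩ := IH (N - m) hNm (fun i => x (m + i))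
        (fun i hi => by
          have h' : m + (i + 1) = m + i + 1 := by ring
          rw [h']; exact hx (m + i) (by omega))
        c₂ d₂ dist_nonneg hc₂ (by rw [hc₂0, Nat.add_zero]) (by rw [hc₂e]; congr 1; omega)
        (d₂ - v) hv'
      refine ⟨m + i, by omega, ?_⟩
      have htot : dist (c t) (x (m + i)) ≤ δ + (6 * δ * Real.sqrt (N - m : ℕ) + K) := by
        calc dist (c t) (x (m + i)) ≤ dist (c t) p + dist p (x (m + i)) := dist_triangle _ _ _
        _ ≤ δ + (6 * δ * Real.sqrt (N - m : ℕ) + K) := by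
            rw [← hpv] at hdp ⊢; exact add_le_add hdp hdi
      linarith [key (N - m) hNmle]
    · -- p on reversed c₁ : first half chain
      obtain ⟨v, hv, hpv⟩ := hp
      have hv' : d₁ - v ∈ Set.Icc (0:ℝ) d₁ := ⟨by linarith [hv.2], by linarith [hv.1]⟩
      obtain ⟨i, hiN, hdi⟩ := IH m hmN x (fun i hi => hx i (by omega))
        c₁ d₁ dist_nonneg hc₁ (by rw [hc₁0]) (by rw [hc₁e]) (d₁ - v) hv'
      refine ⟨i, by omega, ?_⟩
      have htot : dist (c t) (x i) ≤ δ + (6 * δ * Real.sqrt (m : ℕ) + K) := by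
        calc dist (c t) (x i) ≤ dist (c t) p + dist p (x i) := dist_triangle _ _ _
        _ ≤ δ + (6 * δ * Real.sqrt (m : ℕ) + K) := by
            rw [← hpv] at hdp ⊢; exact add_le_add hdp hdi
      linarith [key m hmle]

lemma solve_sqrt_ineq (δ cK a b D : ℝ) (hδ : 0 ≤ δ) (hcK : 0 ≤ cK) (ha : 0 ≤ a)
    (hb : 0 ≤ b) (hD : 0 ≤ D) (h : D ≤ 6 * δ * Real.sqrt (a * D + b) + cK) :
    D ≤ cK + 36 * δ^2 * a + 6 * δ * Real.sqrt (a * cK + b) := by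
  set s := Real.sqrt (a * D + b) with hs
  set g := Real.sqrt (a * cK + b) with hg
  have hs0 : 0 ≤ s := Real.sqrt_nonneg _
  have hg0 : 0 ≤ g := Real.sqrt_nonneg _
  have hss : s * s = a * D + b := Real.mul_self_sqrt (by positivity)
  have hgg : g * g = a * cK + b := Real.mul_self_sqrt (by positivity)
  by_contra hcon
  push_neg at hcon
  set G := 6 * δ * g with hG
  have hG0 : 0 ≤ G := by positivity
  set y := D - cK with hy
  have hβ : 0 ≤ 36 * δ^2 * a := by positivity
  have hycon : 36 * δ^2 * a + G < y := by simp only [hy]; linarith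
  have hy0 : 0 < y := by nlinarith
  have h1 : y * y ≤ (6 * δ * s) * (6 * δ * s) :=
    mul_self_le_mul_self (by linarith) (by linarith)
  have h2 : (6 * δ * s) * (6 * δ * s) = 36 * δ^2 * a * y + G * G := by
    have : (6 * δ * s) * (6 * δ * s) = 36 * δ^2 * (s * s) := by ring
    rw [this, hss]
    have : G * G = 36 * δ^2 * (g * g) := by ring
    rw [this, hgg, hy]; ring
  have h3 : y * y ≤ 36 * δ^2 * a * y + G * G := by linarith
  have h5 : (36 * δ^2 * a + G) * y < y * y := mul_lt_mul_of_pos_right hycon hy0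
  have h6 : G * G ≤ G * y := mul_le_mul_of_nonneg_left (by linarith) hG0
  have h7 : (36 * δ^2 * a + G) * y = 36 * δ^2 * a * y + G * y := by ring
  linarith

set_option maxHeartbeats 2000000 in
lemma morse_b {X : Type*} [MetricSpace X] (hgeo : IsGeodesicSpace X)
    {δ : ℝ} (hδ : 0 ≤ δ) (hX : DeltaHyperbolic X δ)
    (lam eps : ℝ) (hlam : 1 ≤ lam) (heps : 0 ≤ eps) :
    ∃ R, 0 ≤ R ∧ ∀ (q γ : ℝ → X) (T : ℝ), 0 ≤ T →
      (∀ s ∈ Set.Icc (0:ℝ) T, ∀ t ∈ Set.Icc (0:ℝ) T,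
        (1/lam) * |s - t| - eps ≤ dist (q s) (q t)) →
      (∀ s ∈ Set.Icc (0:ℝ) T, ∀ t ∈ Set.Icc (0:ℝ) T,
        dist (q s) (q t) ≤ lam * |s - t| + eps) →
      IsGeodesicSegment γ (dist (q 0) (q T)) → γ 0 = q 0 → γ (dist (q 0) (q T)) = q T →
      ∀ u ∈ Set.Icc (0:ℝ) (dist (q 0) (q T)), ∃ s ∈ Set.Icc (0:ℝ) T, dist (γ u) (q s) ≤ R := by
  have hlam0 : (0:ℝ) < lam := by linarith
  set a : ℝ := 2 + 8 * lam with ha_def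
  set b : ℝ := 6 + 17 * lam + lam * eps with hb_def
  set cK : ℝ := lam + eps with hcK_def
  have ha0 : 0 ≤ a := by simp only [ha_def]; linarith
  have hb0 : 0 ≤ b := by simp only [hb_def]; nlinarith
  have hcK0 : 0 ≤ cK := by simp only [hcK_def]; linarith
  set Db : ℝ := cK + 36 * δ^2 * a + 6 * δ * Real.sqrt (a * cK + b) with hDb_def
  have hDb0 : 0 ≤ Db := by
    have : 0 ≤ 6 * δ * Real.sqrt (a * cK + b) := by positivity
    have : 0 ≤ 36 * δ^2 * a := by positivity
    simp only [hDb_def]; positivity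
  refine ⟨Db + 2, by linarith, ?_⟩
  intro q γ T hT hq1 hq2 hγ hγ0 hγT
  set L := dist (q 0) (q T) with hL_def
  have hL0 : 0 ≤ L := dist_nonneg
  have h0T : (0:ℝ) ∈ Set.Icc (0:ℝ) T := ⟨le_refl _, hT⟩
  have hTT : T ∈ Set.Icc (0:ℝ) T := ⟨hT, le_refl _⟩
  have hne : ∀ u : ℝ, ((fun s => dist (γ u) (q s)) '' Set.Icc (0:ℝ) T).Nonempty :=
    fun u => ⟨_, ⟨0, h0T, rfl⟩⟩
  have hbdd : ∀ u : ℝ, BddBelow ((fun s => dist (γ u) (q s)) '' Set.Icc (0:ℝ) T) :=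
    fun u => ⟨0, by rintro y ⟨s, hs, rfl⟩; exact dist_nonneg⟩
  set g : ℝ → ℝ := fun u => sInf ((fun s => dist (γ u) (q s)) '' Set.Icc (0:ℝ) T) with hg_def
  have hg_le : ∀ u, ∀ s ∈ Set.Icc (0:ℝ) T, g u ≤ dist (γ u) (q s) :=
    fun u s hs => csInf_le (hbdd u) ⟨s, hs, rfl⟩
  have hg0 : ∀ u, 0 ≤ g u :=
    fun u => le_csInf (hne u) (by rintro y ⟨s, hs, rfl⟩; exact dist_nonneg)
  have hg_ex : ∀ u r, g u < r → ∃ s ∈ Set.Icc (0:ℝ) T, dist (γ u) (q s) < r := by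
    intro u r hr
    obtain ⟨y, ⟨s, hs, rfl⟩, hy⟩ := exists_lt_of_csInf_lt (hne u) hr
    exact ⟨s, hs, hy⟩
  have hgL : ∀ u ∈ Set.Icc (0:ℝ) L, g u ≤ L := by
    intro u hu
    have h1 : g u ≤ dist (γ u) (q 0) := hg_le u 0 h0T
    rw [← hγ0, hγ u hu 0 ⟨le_refl _, hL0⟩, sub_zero, abs_of_nonneg hu.1] at h1
    linarith [hu.2]
  set M := sSup (g '' Set.Icc (0:ℝ) L) with hM_def
  have hMbdd : BddAbove (g '' Set.Icc (0:ℝ) L) :=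
    ⟨L, by rintro y ⟨u, hu, rfl⟩; exact hgL u hu⟩
  have hMne : (g '' Set.Icc (0:ℝ) L).Nonempty := ⟨g 0, 0, ⟨le_refl _, hL0⟩, rfl⟩
  have hM_ub : ∀ u ∈ Set.Icc (0:ℝ) L, g u ≤ M := fun u hu => le_csSup hMbdd ⟨u, hu, rfl⟩
  obtain ⟨y₀, ⟨u₀, hu₀, rfl⟩, hyM⟩ := exists_lt_of_lt_csSup hMne
    (show M - 1 < M by linarith)
  set D := g u₀ with hD_def
  have hD0 : 0 ≤ D := hg0 u₀
  have hMD : M ≤ D + 1 := by linarith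
  -- main claim
  have key : D ≤ 6 * δ * Real.sqrt (a * D + b) + cK := by
    set aa := max 0 (u₀ - (3*D+6)) with haa_def
    set bb := min L (u₀ + (3*D+6)) with hbb_def
    have haaL : aa ∈ Set.Icc (0:ℝ) L := ⟨le_max_left _ _, max_le hL0 (by linarith [hu₀.2])⟩
    have hbbL : bb ∈ Set.Icc (0:ℝ) L := ⟨le_min hL0 (by linarith [hu₀.1]), min_le_left _ _⟩
    have haau : aa ≤ u₀ := max_le hu₀.1 (by linarith)
    have hubb : u₀ ≤ bb := le_min hu₀.2 (by linarith)
    have haar : u₀ - aa ≤ 3*D+6 := by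
      have := le_max_right 0 (u₀ - (3*D+6)); linarith
    have hbbr : bb - u₀ ≤ 3*D+6 := by
      have := min_le_right L (u₀ + (3*D+6)); linarith
    have hdau : dist (γ u₀) (γ aa) = u₀ - aa := by
      rw [hγ u₀ hu₀ aa haaL, abs_of_nonneg (by linarith)]
    have hdub : dist (γ u₀) (γ bb) = bb - u₀ := by
      rw [hγ u₀ hu₀ bb hbbL, abs_of_nonpos (by linarith), neg_sub]
    obtain ⟨sm, hsm, hSm, hclm⟩ : ∃ sm ∈ Set.Icc (0:ℝ) T, dist (γ aa) (q sm) ≤ D + 2 ∧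
        ∀ z : X, dist (γ aa) z ≤ dist (γ aa) (q sm) → D ≤ dist (γ u₀) z := by
      rcases le_or_gt (u₀ - (3*D+6)) 0 with h | h
      · have haa0 : aa = 0 := max_eq_left h
        have hqa : γ aa = q 0 := by rw [haa0, hγ0]
        refine ⟨0, h0T, by rw [hqa, dist_self]; linarith, ?_⟩
        intro z hz
        rw [hqa, dist_self] at hz
        have hz0 : z = q 0 := (dist_le_zero.mp hz).symm
        rw [hz0]; exact hg_le u₀ 0 h0T
      · have haev : aa = u₀ - (3*D+6) := max_eq_right h.le
        have hga : g aa < D + 2 := lt_of_le_of_lt (hM_ub aa haaL) (by linarith)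
        obtain ⟨s, hs, hds⟩ := hg_ex aa (D+2) hga
        refine ⟨s, hs, hds.le, ?_⟩
        intro z hz
        have h1 : dist (γ u₀) (γ aa) = 3*D+6 := by rw [hdau, haev]; ring
        have h2 := dist_triangle (γ u₀) z (γ aa)
        have h3 : dist z (γ aa) = dist (γ aa) z := dist_comm _ _
        linarith
    obtain ⟨sp, hsp, hSp, hclp⟩ : ∃ sp ∈ Set.Icc (0:ℝ) T, dist (γ bb) (q sp) ≤ D + 2 ∧
        ∀ z : X, dist (γ bb) z ≤ dist (γ bb) (q sp) → D ≤ dist (γ u₀) z := by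
      rcases le_or_gt L (u₀ + (3*D+6)) with h | h
      · have hbb0 : bb = L := min_eq_left h
        have hqb : γ bb = q T := by rw [hbb0, hγT]
        refine ⟨T, hTT, by rw [hqb, dist_self]; linarith, ?_⟩
        intro z hz
        rw [hqb, dist_self] at hz
        have hz0 : z = q T := (dist_le_zero.mp hz).symm
        rw [hz0]; exact hg_le u₀ T hTT
      · have hbev : bb = u₀ + (3*D+6) := min_eq_right h.le
        have hgb : g bb < D + 2 := lt_of_le_of_lt (hM_ub bb hbbL) (by linarith)
        obtain ⟨s, hs, hds⟩ := hg_ex bb (D+2) hgb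
        refine ⟨s, hs, hds.le, ?_⟩
        intro z hz
        have h1 : dist (γ u₀) (γ bb) = 3*D+6 := by rw [hdub, hbev]; ring
        have h2 := dist_triangle (γ u₀) z (γ bb)
        have h3 : dist z (γ bb) = dist (γ bb) z := dist_comm _ _
        linarith
    obtain ⟨c₁, hc₁, hc₁0, hc₁e⟩ := hgeo (γ aa) (q sm)
    obtain ⟨c₃, hc₃, hc₃0, hc₃e⟩ := hgeo (q sp) (γ bb)
    set S1 := dist (γ aa) (q sm) with hS1_def
    set S2 := dist (q sp) (γ bb) with hS2_def
    set Sq := |sp - sm| with hSq_def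
    have hS1nn : 0 ≤ S1 := dist_nonneg
    have hS2nn : 0 ≤ S2 := dist_nonneg
    have hSqnn : 0 ≤ Sq := abs_nonneg _
    have hS2le : S2 ≤ D + 2 := by rw [hS2_def, dist_comm]; exact hSp
    have hmono : ∀ r : ℝ, 0 ≤ r → r ≤ lam * r := fun r hr => by nlinarith
    set e : ℝ := if sm ≤ sp then 1 else -1 with he_def
    have heSq : e * Sq = sp - sm := by
      rw [he_def, hSq_def]; split_ifs with h
      · rw [abs_of_nonneg (by linarith)]; ring
      · rw [abs_of_neg (by linarith)]; ring
    have heabs : ∀ r : ℝ, |e * r| = |r| := by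
      intro r; rw [he_def]; split_ifs <;> simp [abs_mul]
    set ρ : ℝ → ℝ := fun t => sm + e * (t - S1) with hρ_def
    have hρS1 : ρ S1 = sm := by simp only [hρ_def]; rw [sub_self, mul_zero, add_zero]
    have hρe : ρ (S1 + Sq) = sp := by
      simp only [hρ_def]; rw [show S1 + Sq - S1 = Sq by ring, heSq]; ring
    have hρdiff : ∀ t t' : ℝ, |ρ t - ρ t'| = |t - t'| := by
      intro t t'; simp only [hρ_def]
      rw [show sm + e*(t - S1) - (sm + e*(t' - S1)) = e * (t - t') by ring, heabs]
    have hρmem : ∀ t, S1 ≤ t → t ≤ S1 + Sq → ρ t ∈ Set.Icc (0:ℝ) T := by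
      intro t h1 h2
      simp only [hρ_def, he_def]; split_ifs with h
      · have hSq' : Sq = sp - sm := by rw [hSq_def, abs_of_nonneg (by linarith)]
        exact ⟨by linarith [hsm.1], by linarith [hsp.2]⟩
      · have hSq' : Sq = sm - sp := by
          rw [hSq_def, abs_of_neg (by linarith)]; ring
        exact ⟨by linarith [hsp.1], by linarith [hsm.2]⟩
    set A := S1 + Sq + S2 with hA_def
    have hA0 : 0 ≤ A := by simp only [hA_def]; linarith
    set p : ℝ → X := fun t => if t ≤ S1 then c₁ t else if t ≤ S1 + Sq then q (ρ t)
      else c₃ (t - S1 - Sq) with hp_def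
    have hp0 : p 0 = γ aa := by simp only [hp_def]; rw [if_pos hS1nn]; exact hc₁0
    have hpA : p A = γ bb := by
      by_cases h1 : A ≤ S1
      · have hSq0 : Sq = 0 := by simp only [hA_def] at h1; linarith
        have hS20 : S2 = 0 := by simp only [hA_def] at h1; linarith
        have hqb : q sp = γ bb := by
          apply dist_eq_zero.mp; rw [← hS2_def]; exact hS20
        have hsme : sm = sp := by
          have h4 : sp - sm = 0 := by
            have := abs_eq_zero.mp (hSq_def ▸ hSq0); linarith [this]
          linarith
        simp only [hp_def]; rw [if_pos h1, show A = S1 by simp only [hA_def]; linarith,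
          hc₁e, hsme, hqb]
      · push_neg at h1
        by_cases h2 : A ≤ S1 + Sq
        · have hS20 : S2 = 0 := by simp only [hA_def] at h2; linarith
          have hqb : q sp = γ bb := by
            apply dist_eq_zero.mp; rw [← hS2_def]; exact hS20
          simp only [hp_def]; rw [if_neg (not_le.mpr h1), if_pos h2,
            show A = S1 + Sq by simp only [hA_def]; linarith, hρe, hqb]
        · push_neg at h2
          simp only [hp_def]; rw [if_neg (not_le.mpr h1), if_neg (not_le.mpr h2),
            show A - S1 - Sq = S2 by simp only [hA_def]; ring]
          exact hc₃e
    have hstep : ∀ t ∈ Set.Icc (0:ℝ) A, ∀ t' ∈ Set.Icc (0:ℝ) A, t ≤ t' →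
        dist (p t) (p t') ≤ lam * (t' - t) + eps := by
      intro t ht t' ht' htt
      have hAex : A = S1 + Sq + S2 := hA_def
      by_cases h1 : t ≤ S1
      · by_cases h1' : t' ≤ S1
        · simp only [hp_def]; rw [if_pos h1, if_pos h1',
            hc₁ t ⟨ht.1, h1⟩ t' ⟨ht'.1, h1'⟩, abs_sub_comm, abs_of_nonneg (by linarith)]
          linarith [hmono (t' - t) (by linarith)]
        · push_neg at h1'
          have d1 : dist (c₁ t) (q sm) = S1 - t := by
            rw [← hc₁e, hc₁ t ⟨ht.1, h1⟩ S1 ⟨hS1nn, le_refl _⟩,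
              abs_of_nonpos (by linarith), neg_sub]
          by_cases h2' : t' ≤ S1 + Sq
          · simp only [hp_def]; rw [if_pos h1, if_neg (not_le.mpr h1'), if_pos h2']
            have hmem' := hρmem t' h1'.le h2'
            have d2 : dist (q sm) (q (ρ t')) ≤ lam * (t' - S1) + eps := by
              have h := hq2 sm hsm (ρ t') hmem'
              have habs : |sm - ρ t'| = t' - S1 := by
                rw [show sm = ρ S1 from hρS1.symm, hρdiff S1 t', abs_sub_comm,
                  abs_of_nonneg (by linarith)]
              rw [habs] at h; exact h
            have tri := dist_triangle (c₁ t) (q sm) (q (ρ t'))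
            have hexp : lam*(t'-t) = lam*(t'-S1) + lam*(S1-t) := by ring
            linarith [hmono (S1-t) (by linarith)]
          · push_neg at h2'
            simp only [hp_def]; rw [if_pos h1, if_neg (not_le.mpr h1'), if_neg (not_le.mpr h2')]
            have dmid : dist (q sm) (q sp) ≤ lam * Sq + eps := by
              have h := hq2 sm hsm sp hsp
              rw [abs_sub_comm sm sp, ← hSq_def] at h; exact h
            have hrmem : t' - S1 - Sq ∈ Set.Icc (0:ℝ) S2 :=
              ⟨by linarith, by simp only [hA_def] at ht'; linarith [ht'.2]⟩
            have d3 : dist (q sp) (c₃ (t' - S1 - Sq)) = t' - S1 - Sq := by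
              rw [← hc₃0, hc₃ 0 ⟨le_refl _, hS2nn⟩ (t'-S1-Sq) hrmem, zero_sub, abs_neg,
                abs_of_nonneg hrmem.1]
            have tri := dist_triangle4 (c₁ t) (q sm) (q sp) (c₃ (t' - S1 - Sq))
            have hexp : lam*(t'-t) = lam*(S1-t) + lam*Sq + lam*(t'-S1-Sq) := by ring
            linarith [hmono (S1-t) (by linarith), hmono (t'-S1-Sq) (by linarith [hrmem.1])]
      · push_neg at h1
        by_cases h2 : t ≤ S1 + Sq
        · have hmemt := hρmem t h1.le h2
          by_cases h2' : t' ≤ S1 + Sq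
          · simp only [hp_def]; rw [if_neg (not_le.mpr h1), if_pos h2,
              if_neg (not_le.mpr (lt_of_lt_of_le h1 htt)), if_pos h2']
            have h := hq2 (ρ t) hmemt (ρ t') (hρmem t' (by linarith) h2')
            rw [hρdiff, abs_sub_comm, abs_of_nonneg (by linarith)] at h; exact h
          · push_neg at h2'
            simp only [hp_def]; rw [if_neg (not_le.mpr h1), if_pos h2,
              if_neg (not_le.mpr (lt_of_lt_of_le h1 htt)), if_neg (not_le.mpr h2')]
            have d2 : dist (q (ρ t)) (q sp) ≤ lam * (S1 + Sq - t) + eps := by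
              have h := hq2 (ρ t) hmemt sp hsp
              have habs : |ρ t - sp| = S1 + Sq - t := by
                rw [show sp = ρ (S1 + Sq) from hρe.symm, hρdiff t (S1+Sq),
                  abs_of_nonpos (by linarith), neg_sub]
              rw [habs] at h; exact h
            have hrmem : t' - S1 - Sq ∈ Set.Icc (0:ℝ) S2 :=
              ⟨by linarith, by simp only [hA_def] at ht'; linarith [ht'.2]⟩
            have d3 : dist (q sp) (c₃ (t' - S1 - Sq)) = t' - S1 - Sq := by
              rw [← hc₃0, hc₃ 0 ⟨le_refl _, hS2nn⟩ (t'-S1-Sq) hrmem, zero_sub, abs_neg,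
                abs_of_nonneg hrmem.1]
            have tri := dist_triangle (q (ρ t)) (q sp) (c₃ (t' - S1 - Sq))
            have hexp : lam*(t'-t) = lam*(S1+Sq-t) + lam*(t'-S1-Sq) := by ring
            linarith [hmono (t'-S1-Sq) (by linarith [hrmem.1])]
        · push_neg at h2
          simp only [hp_def]
          rw [if_neg (not_le.mpr h1), if_neg (not_le.mpr h2),
            if_neg (not_le.mpr (lt_of_lt_of_le h1 htt)),
            if_neg (not_le.mpr (lt_of_lt_of_le h2 htt))]
          have hrt : t - S1 - Sq ∈ Set.Icc (0:ℝ) S2 :=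
            ⟨by linarith, by simp only [hA_def] at ht; linarith [ht.2]⟩
          have hrt' : t' - S1 - Sq ∈ Set.Icc (0:ℝ) S2 :=
            ⟨by linarith, by simp only [hA_def] at ht'; linarith [ht'.2]⟩
          rw [hc₃ _ hrt _ hrt', show t - S1 - Sq - (t' - S1 - Sq) = t - t' by ring,
            abs_sub_comm, abs_of_nonneg (by linarith)]
          linarith [hmono (t' - t) (by linarith)]
    have hfar : ∀ t ∈ Set.Icc (0:ℝ) A, D ≤ dist (γ u₀) (p t) := by
      intro t ht
      by_cases h1 : t ≤ S1
      · simp only [hp_def]; rw [if_pos h1]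
        apply hclm
        have hd : dist (γ aa) (c₁ t) = t := by
          rw [← hc₁0, hc₁ 0 ⟨le_refl _, hS1nn⟩ t ⟨ht.1, h1⟩, zero_sub, abs_neg,
            abs_of_nonneg ht.1]
        rw [hd]; exact h1
      · push_neg at h1
        by_cases h2 : t ≤ S1 + Sq
        · simp only [hp_def]; rw [if_neg (not_le.mpr h1), if_pos h2]
          exact hg_le u₀ (ρ t) (hρmem t h1.le h2)
        · push_neg at h2
          simp only [hp_def]; rw [if_neg (not_le.mpr h1), if_neg (not_le.mpr h2)]
          apply hclp
          have hrmem : t - S1 - Sq ∈ Set.Icc (0:ℝ) S2 :=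
            ⟨by linarith, by simp only [hA_def] at ht; linarith [ht.2]⟩
          have hd : dist (γ bb) (c₃ (t - S1 - Sq)) = S2 - (t - S1 - Sq) := by
            rw [← hc₃e, hc₃ S2 ⟨hS2nn, le_refl _⟩ (t-S1-Sq) hrmem,
              abs_of_nonneg (by linarith [hrmem.2])]
          rw [hd, dist_comm (γ bb) (q sp), ← hS2_def]
          linarith [hrmem.1]
    have hdsmsp : dist (q sm) (q sp) ≤ 8*D + 16 := by
      have e1 : dist (q sm) (γ aa) ≤ D + 2 := by rw [dist_comm, ← hS1_def]; exact hSm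
      have e2 : dist (γ aa) (γ u₀) ≤ 3*D + 6 := by rw [dist_comm, hdau]; linarith only [haar]
      have e3 : dist (γ u₀) (γ bb) ≤ 3*D + 6 := by rw [hdub]; linarith only [hbbr]
      have e4 : dist (γ bb) (q sp) ≤ D + 2 := hSp
      have t1 := dist_triangle (q sm) (γ u₀) (q sp)
      have t2 := dist_triangle (q sm) (γ aa) (γ u₀)
      have t3 := dist_triangle (γ u₀) (γ bb) (q sp)
      linarith only [e1, e2, e3, e4, t1, t2, t3]
    have hSqb : Sq ≤ lam * (8*D + 16 + eps) := by
      have h1 := hq1 sm hsm sp hsp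
      rw [abs_sub_comm sm sp, ← hSq_def] at h1
      have h2 : (1/lam) * Sq ≤ 8*D + 16 + eps := by linarith only [h1, hdsmsp]
      calc Sq = lam * ((1/lam) * Sq) := by field_simp
        _ ≤ lam * (8*D+16+eps) := mul_le_mul_of_nonneg_left h2 (by linarith)
    have hAb : A ≤ a * D + (b - 1) := by
      have : A = S1 + Sq + S2 := hA_def
      simp only [ha_def, hb_def]
      linarith only [this, hSm, hS2le, hSqb, hD0, hlam, heps]
    set N := Nat.ceil A with hN_def
    set x : ℕ → X := fun i => p (min (i:ℝ) A) with hx_def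
    have hxmem : ∀ i : ℕ, min (i:ℝ) A ∈ Set.Icc (0:ℝ) A :=
      fun i => ⟨le_min (Nat.cast_nonneg i) hA0, min_le_right _ _⟩
    have hxstep : ∀ i, i < N → dist (x i) (x (i+1)) ≤ lam + eps := by
      intro i _
      simp only [hx_def]
      have hle : min ((i:ℕ):ℝ) A ≤ min (((i+1:ℕ)):ℝ) A := by
        apply min_le_min _ (le_refl A); push_cast; linarith
      have hdiff : min (((i+1:ℕ)):ℝ) A - min ((i:ℕ):ℝ) A ≤ 1 := by
        rcases le_total ((i:ℝ)) A with h | h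
        · rw [min_eq_left h]
          have : min (((i+1:ℕ)):ℝ) A ≤ ((i+1:ℕ):ℝ) := min_le_left _ _
          push_cast at this ⊢; linarith
        · rw [min_eq_right h, min_eq_right (by push_cast; linarith)]; linarith
      have hs := hstep _ (hxmem i) _ (hxmem (i+1)) hle
      have h2 : lam * (min (((i+1:ℕ)):ℝ) A - min ((i:ℕ):ℝ) A) ≤ lam * 1 :=
        mul_le_mul_of_nonneg_left hdiff (by linarith)
      push_cast at hs h2 ⊢
      linarith only [hs, h2]
    have hx0 : x 0 = γ aa := by
      simp only [hx_def]; rw [Nat.cast_zero, min_eq_left hA0]; exact hp0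
    have hxN : x N = γ bb := by
      simp only [hx_def]; rw [min_eq_right (Nat.le_ceil A)]; exact hpA
    set T' := bb - aa with hT'_def
    have hT'0 : 0 ≤ T' := by simp only [hT'_def]; linarith
    set c' : ℝ → X := fun v => γ (aa + v) with hc'_def
    have hc'g : IsGeodesicSegment c' T' := by
      intro v hv v' hv'
      simp only [hc'_def]
      have hm1 : aa + v ∈ Set.Icc (0:ℝ) L := by
        simp only [hT'_def] at hv
        exact ⟨by linarith [hv.1, haaL.1], by linarith [hv.2, hbbL.2]⟩
      have hm2 : aa + v' ∈ Set.Icc (0:ℝ) L := by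
        simp only [hT'_def] at hv'
        exact ⟨by linarith [hv'.1, haaL.1], by linarith [hv'.2, hbbL.2]⟩
      rw [hγ (aa+v) hm1 (aa+v') hm2]
      congr 1; ring
    obtain ⟨i, hiN, hdi⟩ := chain_thin hgeo hδ hX (lam+eps) (by linarith only [hlam, heps]) N x hxstep c' T' hT'0
      hc'g
      (by simp only [hc'_def]; rw [add_zero, ← hx0])
      (by simp only [hc'_def]; rw [show aa + T' = bb by simp only [hT'_def]; ring, ← hxN])
      (u₀ - aa) ⟨by linarith only [haau], by simp only [hT'_def]; linarith only [hubb]⟩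
    have hcu : c' (u₀ - aa) = γ u₀ := by simp only [hc'_def]; congr 1; ring
    rw [hcu] at hdi
    have hfx := hfar (min (i:ℝ) A) (hxmem i)
    have hxi : x i = p (min (i:ℝ) A) := by simp only [hx_def]
    rw [hxi] at hdi
    have hNle : (N:ℝ) ≤ a*D + b := by
      have hlt : (N:ℝ) < A + 1 := Nat.ceil_lt_add_one hA0
      linarith only [hlt, hAb]
    have hsqm : Real.sqrt (N:ℝ) ≤ Real.sqrt (a*D+b) := Real.sqrt_le_sqrt hNle
    have hmul : 6*δ*Real.sqrt (N:ℝ) ≤ 6*δ*Real.sqrt (a*D+b) :=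
      mul_le_mul_of_nonneg_left hsqm (by positivity)
    simp only [hcK_def]
    linarith only [hdi, hfx, hmul]
  have hfinal : D ≤ Db := by
    have := solve_sqrt_ineq δ cK a b D hδ hcK0 ha0 hb0 hD0 key
    simp only [hDb_def]; linarith
  intro u hu
  have hgu : g u < Db + 2 := lt_of_le_of_lt (hM_ub u hu) (by linarith)
  obtain ⟨s, hs, hds⟩ := hg_ex u (Db + 2) hgu
  exact ⟨s, hs, hds.le⟩

set_option maxHeartbeats 1000000 in
lemma morse_a {X : Type*} [MetricSpace X] (hgeo : IsGeodesicSpace X)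
    {δ : ℝ} (hδ : 0 ≤ δ) (hX : DeltaHyperbolic X δ)
    (lam eps : ℝ) (hlam : 1 ≤ lam) (heps : 0 ≤ eps) :
    ∃ R', 0 ≤ R' ∧ ∀ (q γ : ℝ → X) (T : ℝ), 0 ≤ T →
      (∀ s ∈ Set.Icc (0:ℝ) T, ∀ t ∈ Set.Icc (0:ℝ) T,
        (1/lam) * |s - t| - eps ≤ dist (q s) (q t)) →
      (∀ s ∈ Set.Icc (0:ℝ) T, ∀ t ∈ Set.Icc (0:ℝ) T,
        dist (q s) (q t) ≤ lam * |s - t| + eps) →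
      IsGeodesicSegment γ (dist (q 0) (q T)) → γ 0 = q 0 → γ (dist (q 0) (q T)) = q T →
      ∀ t ∈ Set.Icc (0:ℝ) T, ∃ u ∈ Set.Icc (0:ℝ) (dist (q 0) (q T)),
        dist (q t) (γ u) ≤ R' := by
  classical
  obtain ⟨R, hR0, hRB⟩ := morse_b hgeo hδ hX lam eps hlam heps
  have hlam0 : (0:ℝ) < lam := by linarith
  refine ⟨lam * (lam * (2*R + 1 + eps)) + eps + R, ?_, ?_⟩
  · have h1 : 0 ≤ lam * (lam * (2*R + 1 + eps)) :=
      mul_nonneg (by linarith) (mul_nonneg (by linarith) (by linarith))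
    linarith
  intro q γ T hT hq1 hq2 hγ hγ0 hγT t ht
  set L := dist (q 0) (q T) with hL_def
  have hL0 : 0 ≤ L := dist_nonneg
  have h0T : (0:ℝ) ∈ Set.Icc (0:ℝ) T := ⟨le_refl _, hT⟩
  have hTT : T ∈ Set.Icc (0:ℝ) T := ⟨hT, le_refl _⟩
  have hRconc := hRB q γ T hT hq1 hq2 hγ hγ0 hγT
  choose σ hσmem hσdist using hRconc
  set τ : ℝ → ℝ := fun u => if hu : u ∈ Set.Icc (0:ℝ) L then (if u = L then T else σ u hu)
    else 0 with hτ_def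
  have hτ : ∀ u, u ∈ Set.Icc (0:ℝ) L →
      (τ u ∈ Set.Icc (0:ℝ) T ∧ dist (γ u) (q (τ u)) ≤ R) := by
    intro u hu
    simp only [hτ_def]; rw [dif_pos hu]
    by_cases hL : u = L
    · rw [if_pos hL]
      refine ⟨hTT, ?_⟩
      rw [hL, hγT, dist_self]; exact hR0
    · rw [if_neg hL]; exact ⟨hσmem u hu, hσdist u hu⟩
  by_cases hLz : L = 0
  · -- degenerate case
    refine ⟨0, ⟨le_refl _, hL0⟩, ?_⟩
    have hdt : dist (q t) (q 0) ≤ lam * t + eps := by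
      have h := hq2 t ht 0 h0T; rw [sub_zero, abs_of_nonneg ht.1] at h; exact h
    have hTb : T ≤ lam * eps := by
      have h1 := hq1 0 h0T T hTT
      rw [zero_sub, abs_neg, abs_of_nonneg hT, ← hL_def] at h1
      have h2 : (1/lam) * T ≤ eps := by linarith only [h1, hLz.le, hLz.ge]
      calc T = lam * ((1/lam) * T) := by field_simp
        _ ≤ lam * eps := mul_le_mul_of_nonneg_left h2 (by linarith)
    rw [hγ0]
    have h3 : lam * t ≤ lam * T := mul_le_mul_of_nonneg_left ht.2 (by linarith)
    have h4 : lam * T ≤ lam * (lam * eps) := mul_le_mul_of_nonneg_left hTb (by linarith)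
    have h5 : lam * (lam * eps) ≤ lam * (lam * (2*R + 1 + eps)) :=
      mul_le_mul_of_nonneg_left
        (mul_le_mul_of_nonneg_left (by linarith only [hR0]) (by linarith))
        (by linarith)
    linarith only [hdt, h3, h4, h5, hR0]
  · -- main case
    set N := Nat.ceil L with hN_def
    have hNpos : 1 ≤ N := by
      rw [hN_def]
      exact Nat.ceil_pos.mpr (lt_of_le_of_ne hL0 (Ne.symm hLz))
    have hLN : L ≤ (N:ℝ) := Nat.le_ceil L
    set w : ℕ → ℝ := fun k => if k = 0 then 0 else τ (min (k:ℝ) L) with hw_def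
    have hminmem : ∀ k : ℕ, min (k:ℝ) L ∈ Set.Icc (0:ℝ) L :=
      fun k => ⟨le_min (Nat.cast_nonneg k) hL0, min_le_right _ _⟩
    have hwmem : ∀ k, w k ∈ Set.Icc (0:ℝ) T := by
      intro k; simp only [hw_def]; split_ifs with h
      · exact ⟨le_refl _, hT⟩
      · exact (hτ _ (hminmem k)).1
    have hwdist : ∀ k : ℕ, dist (γ (min (k:ℝ) L)) (q (w k)) ≤ R := by
      intro k; simp only [hw_def]; split_ifs with h
      · subst h
        rw [Nat.cast_zero, min_eq_left hL0, hγ0, dist_self]; exact hR0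
      · exact (hτ _ (hminmem k)).2
    have hw0 : w 0 = 0 := by simp [hw_def]
    have hwN : w N = T := by
      simp only [hw_def, hτ_def]
      rw [if_neg (by omega : ¬ N = 0), min_eq_right hLN]
      split_ifs with h1 h2
      · rfl
      · exact absurd ⟨hL0, le_refl L⟩ h1
    have hstepw : ∀ k : ℕ, |w k - w (k+1)| ≤ lam * (2*R + 1 + eps) := by
      intro k
      have t1 := hwdist k
      have t2 := hwdist (k+1)
      have t3 : dist (γ (min ((k:ℕ):ℝ) L)) (γ (min (((k+1:ℕ)):ℝ) L)) ≤ 1 := by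
        have h1 : min ((k:ℕ):ℝ) L ≤ min (((k+1:ℕ)):ℝ) L :=
          min_le_min (by push_cast; linarith) (le_refl _)
        have h2 : min (((k+1:ℕ)):ℝ) L - min ((k:ℕ):ℝ) L ≤ 1 := by
          rcases le_total ((k:ℝ)) L with h | h
          · rw [min_eq_left h]
            have h3 : min (((k+1:ℕ)):ℝ) L ≤ ((k+1:ℕ):ℝ) := min_le_left _ _
            push_cast at h3 ⊢; linarith
          · rw [min_eq_right h, min_eq_right (by push_cast; linarith)]; linarith
        rw [hγ _ (hminmem k) _ (hminmem (k+1)), abs_of_nonpos (by linarith only [h1])]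
        linarith only [h2]
      have hd : dist (q (w k)) (q (w (k+1))) ≤ 2*R + 1 := by
        have tri := dist_triangle4 (q (w k)) (γ (min ((k:ℕ):ℝ) L))
          (γ (min (((k+1:ℕ)):ℝ) L)) (q (w (k+1)))
        have t1' : dist (q (w k)) (γ (min ((k:ℕ):ℝ) L)) ≤ R := by
          rw [dist_comm]; exact t1
        linarith only [tri, t1', t2, t3]
      have h1 := hq1 (w k) (hwmem k) (w (k+1)) (hwmem (k+1))
      have h2 : (1/lam) * |w k - w (k+1)| ≤ 2*R + 1 + eps := by linarith only [h1, hd]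
      calc |w k - w (k+1)| = lam * ((1/lam) * |w k - w (k+1)|) := by field_simp
        _ ≤ lam * (2*R + 1 + eps) := mul_le_mul_of_nonneg_left h2 (by linarith)
    set P : ℕ → Prop := fun k => w k ≤ t with hP_def
    set k0 := Nat.findGreatest P N with hk0_def
    have hk0N : k0 ≤ N := Nat.findGreatest_le N
    have hPk0 : w k0 ≤ t := by
      have h := Nat.findGreatest_spec (Nat.zero_le N)
        (show P 0 by simp only [hP_def]; rw [hw0]; exact ht.1)
      simpa only [hP_def] using h
    have hnear : |t - w k0| ≤ lam * (2*R + 1 + eps) := by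
      have hM1 : 0 ≤ lam * (2*R + 1 + eps) :=
        mul_nonneg (by linarith) (by linarith)
      by_cases hk0 : k0 = N
      · have h1 : t ≤ w k0 := by rw [hk0, hwN]; exact ht.2
        rw [abs_of_nonneg (by linarith only [hPk0])]
        linarith only [h1, hPk0, hM1]
      · have hk0lt : k0 < N := lt_of_le_of_ne hk0N hk0
        have hnP : ¬ P (k0 + 1) := Nat.findGreatest_is_greatest (n := N) (by omega) (by omega)
        simp only [hP_def] at hnP; push_neg at hnP
        have hs := hstepw k0
        have habs := abs_le.mp hs
        rw [abs_of_nonneg (by linarith only [hPk0])]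
        linarith only [hnP, habs.1, hPk0]
    refine ⟨min ((k0:ℕ):ℝ) L, hminmem k0, ?_⟩
    have hdk : dist (q (w k0)) (γ (min ((k0:ℕ):ℝ) L)) ≤ R := by
      rw [dist_comm]; exact hwdist k0
    have hq := hq2 t ht (w k0) (hwmem k0)
    have tri := dist_triangle (q t) (q (w k0)) (γ (min ((k0:ℕ):ℝ) L))
    have hmm : lam * |t - w k0| ≤ lam * (lam * (2*R + 1 + eps)) :=
      mul_le_mul_of_nonneg_left hnear (by linarith)
    linarith only [tri, hq, hdk, hmm]

lemma qi_transfer {X₁ X₂ : Type*} [MetricSpace X₁] [MetricSpace X₂]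
    (hgeo₂ : IsGeodesicSpace X₂)
    (f : X₁ → X₂) (lam eps : ℝ) (hlam : 1 ≤ lam) (heps : 0 ≤ eps)
    (h1 : ∀ x y : X₁, (1/lam) * dist x y - eps ≤ dist (f x) (f y))
    (h2 : ∀ x y : X₁, dist (f x) (f y) ≤ lam * dist x y + eps)
    {δ : ℝ} (hδ : 0 ≤ δ) (hX₂ : DeltaHyperbolic X₂ δ) :
    ∃ δ₁ : ℝ, 0 ≤ δ₁ ∧ DeltaHyperbolic X₁ δ₁ := by
  obtain ⟨R, hR0, hRB⟩ := morse_b hgeo₂ hδ hX₂ lam eps hlam heps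
  obtain ⟨R', hR'0, hRA⟩ := morse_a hgeo₂ hδ hX₂ lam eps hlam heps
  have hlam0 : (0:ℝ) < lam := by linarith
  refine ⟨lam * (R' + δ + R + eps), mul_nonneg (by linarith) (by linarith), ?_⟩
  intro c₀ c₁ c₂ T₀ T₁ T₂ hT₀ hT₁ hT₂ hc₀ hc₁ hc₂ he₀ he₁ he₂ t ht
  have hqg1 : ∀ (c : ℝ → X₁) (T : ℝ), IsGeodesicSegment c T →
      ∀ s ∈ Set.Icc (0:ℝ) T, ∀ u ∈ Set.Icc (0:ℝ) T,
        (1/lam) * |s - u| - eps ≤ dist (f (c s)) (f (c u)) := by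
    intro c T hc s hs u hu
    have h := h1 (c s) (c u); rw [hc s hs u hu] at h; exact h
  have hqg2 : ∀ (c : ℝ → X₁) (T : ℝ), IsGeodesicSegment c T →
      ∀ s ∈ Set.Icc (0:ℝ) T, ∀ u ∈ Set.Icc (0:ℝ) T,
        dist (f (c s)) (f (c u)) ≤ lam * |s - u| + eps := by
    intro c T hc s hs u hu
    have h := h2 (c s) (c u); rw [hc s hs u hu] at h; exact h
  set q₀ : ℝ → X₂ := fun s => f (c₀ s) with hq₀_def
  set q₁ : ℝ → X₂ := fun s => f (c₁ s) with hq₁_def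
  set q₂ : ℝ → X₂ := fun s => f (c₂ s) with hq₂_def
  obtain ⟨σ₀, hσ₀, hσ₀0, hσ₀e⟩ := hgeo₂ (q₀ 0) (q₀ T₀)
  obtain ⟨σ₁, hσ₁, hσ₁0, hσ₁e⟩ := hgeo₂ (q₁ 0) (q₁ T₁)
  obtain ⟨σ₂, hσ₂, hσ₂0, hσ₂e⟩ := hgeo₂ (q₂ 0) (q₂ T₂)
  set L₀ := dist (q₀ 0) (q₀ T₀) with hL₀_def
  set L₁ := dist (q₁ 0) (q₁ T₁) with hL₁_def
  set L₂ := dist (q₂ 0) (q₂ T₂) with hL₂_def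
  obtain ⟨u, hu, hdu⟩ := hRA q₀ σ₀ T₀ hT₀ (hqg1 c₀ T₀ hc₀) (hqg2 c₀ T₀ hc₀)
    hσ₀ hσ₀0 hσ₀e t ht
  obtain ⟨p, hp, hdp⟩ := hX₂ σ₀ σ₁ σ₂ L₀ L₁ L₂ dist_nonneg dist_nonneg dist_nonneg
    hσ₀ hσ₁ hσ₂
    (by rw [hσ₀e, hσ₁0]; simp only [hq₀_def, hq₁_def]; rw [he₀])
    (by rw [hσ₁e, hσ₂0]; simp only [hq₁_def, hq₂_def]; rw [he₁])
    (by rw [hσ₂e, hσ₀0]; simp only [hq₂_def, hq₀_def]; rw [he₂])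
    u hu
  have hmul : ∀ d b : ℝ, (1/lam) * d - eps ≤ b → b ≤ R' + δ + R → d ≤ lam * (R' + δ + R + eps) := by
    intro d b hlow hup
    have h4 : (1/lam) * d ≤ R' + δ + R + eps := by linarith
    calc d = lam * ((1/lam) * d) := by field_simp
      _ ≤ lam * (R' + δ + R + eps) := mul_le_mul_of_nonneg_left h4 (by linarith)
  rcases hp with ⟨v, hv, hpv⟩ | ⟨v, hv, hpv⟩
  · obtain ⟨s, hs, hds⟩ := hRB q₁ σ₁ T₁ hT₁ (hqg1 c₁ T₁ hc₁) (hqg2 c₁ T₁ hc₁)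
      hσ₁ hσ₁0 hσ₁e v hv
    refine ⟨c₁ s, Or.inl ⟨s, hs, rfl⟩, ?_⟩
    have tri := dist_triangle4 (q₀ t) (σ₀ u) (σ₁ v) (q₁ s)
    rw [← hpv] at hdp
    have hlow := h1 (c₀ t) (c₁ s)
    exact hmul _ _ hlow (by linarith)
  · obtain ⟨s, hs, hds⟩ := hRB q₂ σ₂ T₂ hT₂ (hqg1 c₂ T₂ hc₂) (hqg2 c₂ T₂ hc₂)
      hσ₂ hσ₂0 hσ₂e v hv
    refine ⟨c₂ s, Or.inr ⟨s, hs, rfl⟩, ?_⟩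
    have tri := dist_triangle4 (q₀ t) (σ₀ u) (σ₂ v) (q₂ s)
    rw [← hpv] at hdp
    have hlow := h1 (c₀ t) (c₂ s)
    exact hmul _ _ hlow (by linarith)

theorem quasi_isometry_preserves_hyperbolicity
    {X₁ X₂ : Type*} [MetricSpace X₁] [MetricSpace X₂]
    (hgeo₁ : IsGeodesicSpace X₁) (hgeo₂ : IsGeodesicSpace X₂)
    (f : X₁ → X₂) (lam α C : ℝ) (hlam : 1 ≤ lam) (hα : 0 ≤ α) (hC : 0 ≤ C)
    (hqi₁ : ∀ x y : X₁, (1 / lam) * dist x y - α ≤ dist (f x) (f y))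
    (hqi₂ : ∀ x y : X₁, dist (f x) (f y) ≤ lam * dist x y + α)
    (hqi₃ : ∀ z : X₂, ∃ x : X₁, dist z (f x) ≤ C) :
    (∃ δ₁ : ℝ, 0 ≤ δ₁ ∧ DeltaHyperbolic X₁ δ₁) ↔
      (∃ δ₂ : ℝ, 0 ≤ δ₂ ∧ DeltaHyperbolic X₂ δ₂) := by
  have hlam0 : (0:ℝ) < lam := by linarith
  constructor
  · rintro ⟨δ₁, hδ₁, hX₁⟩
    choose gf hg using hqi₃
    set eps' := lam * (2*C + α) + α with heps'_def
    have heps'0 : 0 ≤ eps' := by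
      have : 0 ≤ lam * (2*C + α) := mul_nonneg (by linarith) (by linarith)
      simp only [heps'_def]; linarith
    have hcore : 2*C + α ≤ eps' := by
      have h := mul_le_mul_of_nonneg_right hlam (show 0 ≤ 2*C + α by linarith)
      rw [one_mul] at h
      simp only [heps'_def]; linarith
    have hg1 : ∀ z z' : X₂, (1/lam) * dist z z' - eps' ≤ dist (gf z) (gf z') := by
      intro z z'
      have hfz := hg z
      have hfz' := hg z'
      have tri := dist_triangle4 z (f (gf z)) (f (gf z')) z'
      have hcm : dist (f (gf z')) z' = dist z' (f (gf z')) := dist_comm _ _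
      have hup := hqi₂ (gf z) (gf z')
      have key : dist z z' - 2*C - α ≤ lam * dist (gf z) (gf z') := by linarith
      have h4 : (1/lam) * (dist z z' - 2*C - α) ≤ (1/lam) * (lam * dist (gf z) (gf z')) :=
        mul_le_mul_of_nonneg_left key (by positivity)
      have h3 : (1/lam) * (lam * dist (gf z) (gf z')) = dist (gf z) (gf z') := by field_simp
      rw [h3] at h4
      have h5 : (1/lam) * (dist z z' - 2*C - α)
          = (1/lam) * dist z z' - (1/lam) * (2*C + α) := by ring
      have h6 : (1/lam) * (2*C + α) ≤ eps' := by
        have ha : (1/lam) ≤ 1 := by rw [div_le_one hlam0]; exact hlam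
        have hb : (1/lam) * (2*C + α) ≤ 1 * (2*C + α) :=
          mul_le_mul_of_nonneg_right ha (by linarith)
        rw [one_mul] at hb; linarith
      linarith
    have hg2 : ∀ z z' : X₂, dist (gf z) (gf z') ≤ lam * dist z z' + eps' := by
      intro z z'
      have hfz := hg z
      have hfz' := hg z'
      have tri := dist_triangle4 (f (gf z)) z z' (f (gf z'))
      have hcm : dist (f (gf z)) z = dist z (f (gf z)) := dist_comm _ _
      have hlow := hqi₁ (gf z) (gf z')
      have h4 : (1/lam) * dist (gf z) (gf z') ≤ dist z z' + 2*C + α := by linarith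
      have h5 : lam * ((1/lam) * dist (gf z) (gf z')) = dist (gf z) (gf z') := by field_simp
      have h6 : lam * ((1/lam) * dist (gf z) (gf z')) ≤ lam * (dist z z' + 2*C + α) :=
        mul_le_mul_of_nonneg_left h4 (by linarith)
      rw [h5] at h6
      have h7 : lam * (dist z z' + 2*C + α) = lam * dist z z' + lam * (2*C + α) := by ring
      simp only [heps'_def]; linarith
    exact qi_transfer hgeo₁ gf lam eps' hlam heps'0 hg1 hg2 hδ₁ hX₁
  · rintro ⟨δ₂, hδ₂, hX₂⟩
    exact qi_transfer hgeo₂ f lam α hlam hα hqi₁ hqi₂ hδ₂ hX₂
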